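/- arXiv:2604.26611 — 5 statements merged into one kernel-verified Lean document; each statement's English description precedes it below -/
import Mathlib

section
/- Let M ∈ SL(2n, ℤ), P ∈ GL(2n, ℝ) and λ₁, …, λₙ ∈ ℝ be such that P·M·P⁻¹ is the block-diagonal matrix diag(Δ, Δ) with Δ = diag(e^{λ₁}, …, e^{λₙ}). Let B = (Idₙ | i·Idₙ)·P be the complex n×2n matrix obtained by multiplying P on the left by the horizontal juxtaposition of Idₙ and i·Idₙ, and let Γ' = B·ℤ^{2n} = {B·c : c ∈ ℤ^{2n}} ⊆ ℂⁿ. Then for every α ∈ Λ_τ and every β ∈ Γ' one has ρ_τ(α)·β ∈ Γ'; indeed, if β = B·c with c ∈ ℤ^{2n}, then ρ_τ(α)·β = B·(M^{D_τ(α)}·c). -/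
/-- The first coordinate of `w` in the real basis `{1, τ}` of `ℂ`. -/
noncomputable def Dtau (τ w : ℂ) : ℂ :=
  ((starRingEnd ℂ) w * τ - w * (starRingEnd ℂ) τ) / (τ - (starRingEnd ℂ) τ)

/-- `ρ_τ(w) = diag(e^{λ₁ D_τ(w)}, …, e^{λₙ D_τ(w)})`. -/
noncomputable def rho {n : ℕ} (lam : Fin n → ℝ) (τ w : ℂ) :
    Matrix (Fin n) (Fin n) ℂ :=
  Matrix.diagonal fun i => Complex.exp ((lam i : ℂ) * Dtau τ w)

theorem stmt_5 {n : ℕ} (lam : Fin n → ℝ) (τ : ℂ) (hτ : 0 < τ.im)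
    (M : Matrix.SpecialLinearGroup (Fin n ⊕ Fin n) ℤ)
    (P : Matrix (Fin n ⊕ Fin n) (Fin n ⊕ Fin n) ℝ) (hP : IsUnit P)
    (hPMP : P * ((M : Matrix (Fin n ⊕ Fin n) (Fin n ⊕ Fin n) ℤ).map
        (Int.cast : ℤ → ℝ)) * P⁻¹ =
      Matrix.fromBlocks (Matrix.diagonal fun i => Real.exp (lam i)) 0 0
        (Matrix.diagonal fun i => Real.exp (lam i)))
    (B : Matrix (Fin n) (Fin n ⊕ Fin n) ℂ)
    (hB : B = Matrix.fromCols (1 : Matrix (Fin n) (Fin n) ℂ)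
        (Complex.I • (1 : Matrix (Fin n) (Fin n) ℂ)) *
        (P.map (Complex.ofReal : ℝ → ℂ)))
    (Γ' : Set (Fin n → ℂ))
    (hΓ' : Γ' = {z | ∃ c : Fin n ⊕ Fin n → ℤ,
        z = B.mulVec fun j => ((c j : ℤ) : ℂ)})
    (a b : ℤ) (α : ℂ) (hα : α = (a : ℂ) + (b : ℂ) * τ) :
    (∀ β ∈ Γ', (rho lam τ α).mulVec β ∈ Γ') ∧
    (∀ c : Fin n ⊕ Fin n → ℤ,
      (rho lam τ α).mulVec (B.mulVec fun j => ((c j : ℤ) : ℂ)) =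
        B.mulVec fun j =>
          ((((M ^ a : Matrix.SpecialLinearGroup (Fin n ⊕ Fin n) ℤ) :
              Matrix (Fin n ⊕ Fin n) (Fin n ⊕ Fin n) ℤ).mulVec c) j : ℂ)) := by
  classical
  -- τ ≠ conj τ
  have hτne : τ - (starRingEnd ℂ) τ ≠ 0 := by
    intro h
    have h2 := congrArg Complex.im h
    simp [Complex.sub_im, Complex.conj_im] at h2
    rw [h2] at hτ
    exact lt_irrefl 0 hτ
  -- Dtau τ α = a
  have hD : Dtau τ α = (a : ℂ) := by
    unfold Dtau
    rw [hα, div_eq_iff hτne]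
    simp only [map_add, map_mul, map_intCast]
    ring
  have hrho : rho lam τ α = Matrix.diagonal fun i => Complex.exp ((lam i : ℂ) * a) := by
    unfold rho
    rw [hD]
  set Pc : Matrix (Fin n ⊕ Fin n) (Fin n ⊕ Fin n) ℂ := P.map (Complex.ofReal : ℝ → ℂ) with hPc
  set Mc : Matrix (Fin n ⊕ Fin n) (Fin n ⊕ Fin n) ℂ :=
    (M : Matrix (Fin n ⊕ Fin n) (Fin n ⊕ Fin n) ℤ).map (Int.cast : ℤ → ℂ) with hMc
  set E : ℤ → Matrix (Fin n ⊕ Fin n) (Fin n ⊕ Fin n) ℂ := fun t =>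
    Matrix.fromBlocks (Matrix.diagonal fun i => Complex.exp ((lam i : ℂ) * t)) 0 0
      (Matrix.diagonal fun i => Complex.exp ((lam i : ℂ) * t)) with hE
  -- over ℝ: P * M = D * P
  have hPdet : IsUnit P.det := (Matrix.isUnit_iff_isUnit_det P).mp hP
  have h1 : P * ((M : Matrix (Fin n ⊕ Fin n) (Fin n ⊕ Fin n) ℤ).map (Int.cast : ℤ → ℝ)) =
      Matrix.fromBlocks (Matrix.diagonal fun i => Real.exp (lam i)) 0 0
        (Matrix.diagonal fun i => Real.exp (lam i)) * P := by
    have := congrArg (· * P) hPMP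
    simpa [mul_assoc, Matrix.nonsing_inv_mul _ hPdet] using this
  -- over ℂ: Pc * Mc = E 1 * Pc
  have hE1 : ∀ t : ℤ, E t * E 1 = E (t + 1) := by
    intro t
    have hfun : (fun i : Fin n =>
        Complex.exp ((lam i : ℂ) * t) * Complex.exp ((lam i : ℂ) * ((1 : ℤ) : ℂ))) =
        fun i : Fin n => Complex.exp ((lam i : ℂ) * ((t + 1 : ℤ) : ℂ)) := by
      funext i
      rw [← Complex.exp_add]
      congr 1
      push_cast
      ring
    have hd := congrArg (Matrix.diagonal (n := Fin n) (α := ℂ)) hfun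
    simp only [hE, Matrix.fromBlocks_multiply, Matrix.diagonal_mul_diagonal,
      Matrix.mul_zero, Matrix.zero_mul, add_zero, zero_add, hd]
  have hPMc : Pc * Mc = E 1 * Pc := by
    have h2 := congrArg (fun X => X.map (Complex.ofRealHom : ℝ →+* ℂ)) h1
    simp only [Matrix.map_mul] at h2
    have hMr : ((M : Matrix (Fin n ⊕ Fin n) (Fin n ⊕ Fin n) ℤ).map (Int.cast : ℤ → ℝ)).map
        (Complex.ofRealHom : ℝ →+* ℂ) = Mc := by
      ext i j
      simp [hMc, Matrix.map_apply]
    have hDr : (Matrix.fromBlocks (Matrix.diagonal fun i => Real.exp (lam i)) 0 0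
        (Matrix.diagonal fun i => Real.exp (lam i))).map (Complex.ofRealHom : ℝ →+* ℂ) = E 1 := by
      simp only [hE, Matrix.fromBlocks_map, Matrix.map_zero _ (map_zero _),
        Matrix.diagonal_map (map_zero _)]
      congr 2 <;> (funext i; simp [Complex.ofReal_exp])
    rw [hMr, hDr] at h2
    exact h2
  -- Mc is a unit
  have hMcu : IsUnit Mc := by
    apply (Matrix.isUnit_iff_isUnit_det Mc).mpr
    rw [hMc, show (M : Matrix (Fin n ⊕ Fin n) (Fin n ⊕ Fin n) ℤ).map (Int.cast : ℤ → ℂ) =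
      (Int.castRingHom ℂ).mapMatrix (M : Matrix (Fin n ⊕ Fin n) (Fin n ⊕ Fin n) ℤ) from rfl,
      ← RingHom.map_det]
    simp
  -- key: Pc * (M^t map) = E t * Pc for all t : ℤ
  have hMpow : ∀ t : ℤ,
      ((M ^ t : Matrix.SpecialLinearGroup (Fin n ⊕ Fin n) ℤ) :
        Matrix (Fin n ⊕ Fin n) (Fin n ⊕ Fin n) ℤ).map (Int.cast : ℤ → ℂ) =
      ((M ^ t : Matrix.SpecialLinearGroup (Fin n ⊕ Fin n) ℤ) :
        Matrix (Fin n ⊕ Fin n) (Fin n ⊕ Fin n) ℤ).map (Int.cast : ℤ → ℂ) := fun _ => rfl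
  have key : ∀ t : ℤ, Pc * (((M ^ t : Matrix.SpecialLinearGroup (Fin n ⊕ Fin n) ℤ) :
      Matrix (Fin n ⊕ Fin n) (Fin n ⊕ Fin n) ℤ).map (Int.cast : ℤ → ℂ)) = E t * Pc := by
    intro t
    induction t using Int.induction_on with
    | zero =>
      simp only [zpow_zero]
      have : ((1 : Matrix.SpecialLinearGroup (Fin n ⊕ Fin n) ℤ) :
          Matrix (Fin n ⊕ Fin n) (Fin n ⊕ Fin n) ℤ).map (Int.cast : ℤ → ℂ) = 1 := by
        simp
      rw [this, mul_one]
      have : E 0 = 1 := by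
        simp [hE, Matrix.fromBlocks_one]
      rw [this, one_mul]
    | succ k ih =>
      have hsplit : (M ^ ((k : ℤ) + 1)) = M ^ (k : ℤ) * M := by
        rw [zpow_add_one]
      
      rw [hsplit]
      have hmap : ((M ^ (k : ℤ) * M : Matrix.SpecialLinearGroup (Fin n ⊕ Fin n) ℤ) :
          Matrix (Fin n ⊕ Fin n) (Fin n ⊕ Fin n) ℤ).map (Int.cast : ℤ → ℂ) =
          (((M ^ (k : ℤ) : Matrix.SpecialLinearGroup (Fin n ⊕ Fin n) ℤ) :
            Matrix (Fin n ⊕ Fin n) (Fin n ⊕ Fin n) ℤ).map (Int.cast : ℤ → ℂ)) * Mc := by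
        rw [Matrix.SpecialLinearGroup.coe_mul]
        exact Matrix.map_mul (f := Int.castRingHom ℂ)
      rw [hmap, ← mul_assoc, ih, mul_assoc, hPMc, ← mul_assoc, hE1]
    | pred k ih =>
      have hsplit : (M ^ (-(k : ℤ) - 1) * M) = M ^ (-(k : ℤ)) := by
        rw [← zpow_add_one]
        norm_num
      have hmap : ((M ^ (-(k : ℤ) - 1) * M : Matrix.SpecialLinearGroup (Fin n ⊕ Fin n) ℤ) :
          Matrix (Fin n ⊕ Fin n) (Fin n ⊕ Fin n) ℤ).map (Int.cast : ℤ → ℂ) =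
          (((M ^ (-(k : ℤ) - 1) : Matrix.SpecialLinearGroup (Fin n ⊕ Fin n) ℤ) :
            Matrix (Fin n ⊕ Fin n) (Fin n ⊕ Fin n) ℤ).map (Int.cast : ℤ → ℂ)) * Mc := by
        rw [Matrix.SpecialLinearGroup.coe_mul]
        exact Matrix.map_mul (f := Int.castRingHom ℂ)
      have h3 : E (-(k : ℤ) - 1) * E 1 = E (-(k : ℤ)) := by
        rw [hE1]
        norm_num
      have heq : Pc * (((M ^ (-(k : ℤ) - 1) : Matrix.SpecialLinearGroup (Fin n ⊕ Fin n) ℤ) :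
          Matrix (Fin n ⊕ Fin n) (Fin n ⊕ Fin n) ℤ).map (Int.cast : ℤ → ℂ)) * Mc =
          (E (-(k : ℤ) - 1) * Pc) * Mc := by
        rw [mul_assoc, ← hmap, hsplit, ih, mul_assoc, hPMc, ← mul_assoc, h3]
      exact hMcu.mul_right_cancel heq
  -- the matrix identity
  have hmat : (rho lam τ α) * B = B * (((M ^ a : Matrix.SpecialLinearGroup (Fin n ⊕ Fin n) ℤ) :
      Matrix (Fin n ⊕ Fin n) (Fin n ⊕ Fin n) ℤ).map (Int.cast : ℤ → ℂ)) := by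
    rw [hB, hrho]
    rw [Matrix.mul_assoc, key a, ← Matrix.mul_assoc, ← Matrix.mul_assoc]
    congr 1
    rw [hE, Matrix.fromCols_mul_fromBlocks, Matrix.mul_fromCols]
    simp [Matrix.mul_smul, Matrix.smul_mul]
  -- second conjunct
  have hsecond : ∀ c : Fin n ⊕ Fin n → ℤ,
      (rho lam τ α).mulVec (B.mulVec fun j => ((c j : ℤ) : ℂ)) =
        B.mulVec fun j =>
          ((((M ^ a : Matrix.SpecialLinearGroup (Fin n ⊕ Fin n) ℤ) :
              Matrix (Fin n ⊕ Fin n) (Fin n ⊕ Fin n) ℤ).mulVec c) j : ℂ) := by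
    intro c
    have hv : (((M ^ a : Matrix.SpecialLinearGroup (Fin n ⊕ Fin n) ℤ) :
        Matrix (Fin n ⊕ Fin n) (Fin n ⊕ Fin n) ℤ).map (Int.cast : ℤ → ℂ)).mulVec
          (fun j => ((c j : ℤ) : ℂ)) =
        fun j => ((((M ^ a : Matrix.SpecialLinearGroup (Fin n ⊕ Fin n) ℤ) :
          Matrix (Fin n ⊕ Fin n) (Fin n ⊕ Fin n) ℤ).mulVec c) j : ℂ) := by
      funext j
      exact (RingHom.map_mulVec (Int.castRingHom ℂ) _ c j).symm
    rw [Matrix.mulVec_mulVec, hmat, ← Matrix.mulVec_mulVec, hv]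
  refine ⟨?_, hsecond⟩
  intro β hβ
  rw [hΓ'] at hβ ⊢
  obtain ⟨c, rfl⟩ := hβ
  exact ⟨((M ^ a : Matrix.SpecialLinearGroup (Fin n ⊕ Fin n) ℤ) :
    Matrix (Fin n ⊕ Fin n) (Fin n ⊕ Fin n) ℤ).mulVec c, hsecond c⟩
end

section
/- Let (c, h, k), (c₀, h₀, k₀) ∈ D. Then τ(c, h, k) = τ(c₀, h₀, k₀) if and only if there exists a rational number q such that (c, h, k) = q·(c₀, h₀, k₀) (i.e. c = q·c₀, h = q·h₀, k = q·k₀); in that case necessarily q = k/k₀. -/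
/-- Membership in `D = {(c, h, k) ∈ ℝ × ℤ × ℤ : c ≠ 0, k ≠ 0, ck > 0}`. -/
def memD (c : ℝ) (h k : ℤ) : Prop := c ≠ 0 ∧ k ≠ 0 ∧ c * (k : ℝ) > 0

/-- The map `τ(c, h, k) = (2kπ/(4π²h² + c²))·(2hπ + ic)`. -/
noncomputable def tauOf (c : ℝ) (h k : ℤ) : ℂ :=
  (((2 * (k : ℝ) * Real.pi / (4 * Real.pi ^ 2 * (h : ℝ) ^ 2 + c ^ 2)) : ℝ) : ℂ) *
    (((2 * (h : ℝ) * Real.pi : ℝ) : ℂ) + Complex.I * (c : ℂ))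

lemma tauOf_eq' (c : ℝ) (h k : ℤ) : tauOf c h k =
    Complex.ofReal ((2 * (k : ℝ) * Real.pi / (4 * Real.pi ^ 2 * (h : ℝ) ^ 2 + c ^ 2)) *
      (2 * (h : ℝ) * Real.pi))
    + Complex.ofReal ((2 * (k : ℝ) * Real.pi / (4 * Real.pi ^ 2 * (h : ℝ) ^ 2 + c ^ 2)) * c) *
      Complex.I := by
  unfold tauOf
  push_cast
  ring

lemma key' (a b a₀ b₀ : ℝ) :
    (Complex.ofReal a + Complex.ofReal b * Complex.I =
     Complex.ofReal a₀ + Complex.ofReal b₀ * Complex.I) ↔ a = a₀ ∧ b = b₀ := by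
  rw [Complex.ext_iff]
  simp

theorem stmt_13 (c : ℝ) (h k : ℤ) (hD : memD c h k)
    (c₀ : ℝ) (h₀ k₀ : ℤ) (hD₀ : memD c₀ h₀ k₀) :
    (tauOf c h k = tauOf c₀ h₀ k₀ ↔
      ∃ q : ℚ, c = (q : ℝ) * c₀ ∧ (h : ℝ) = (q : ℝ) * (h₀ : ℝ) ∧
        (k : ℝ) = (q : ℝ) * (k₀ : ℝ)) ∧
    (∀ q : ℚ, (c = (q : ℝ) * c₀ ∧ (h : ℝ) = (q : ℝ) * (h₀ : ℝ) ∧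
        (k : ℝ) = (q : ℝ) * (k₀ : ℝ)) → (q : ℝ) = (k : ℝ) / (k₀ : ℝ)) := by
  obtain ⟨hc, hk, hck⟩ := hD
  obtain ⟨hc₀, hk₀, hck₀⟩ := hD₀
  have hπ : (0:ℝ) < Real.pi := Real.pi_pos
  have hkR : (k:ℝ) ≠ 0 := Int.cast_ne_zero.mpr hk
  have hk₀R : (k₀:ℝ) ≠ 0 := Int.cast_ne_zero.mpr hk₀
  have hDpos : (0:ℝ) < 4 * Real.pi ^ 2 * (h:ℝ) ^ 2 + c ^ 2 := by positivity
  have hD₀pos : (0:ℝ) < 4 * Real.pi ^ 2 * (h₀:ℝ) ^ 2 + c₀ ^ 2 := by positivity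
  constructor
  · constructor
    · intro heq
      rw [tauOf_eq', tauOf_eq', key'] at heq
      obtain ⟨e1, e2⟩ := heq
      have hDne := ne_of_gt hDpos
      have hD₀ne := ne_of_gt hD₀pos
      field_simp at e1 e2
      -- derive h*c₀ = h₀*c
      have P : (4 * Real.pi ^ 2 * (k₀:ℝ) * (4 * Real.pi ^ 2 * (h:ℝ) ^ 2 + c ^ 2)) *
          ((h₀:ℝ) * c - (h:ℝ) * c₀) = 0 := by
        linear_combination (4 * Real.pi ^ 2 * (h:ℝ)) * e2 - (4 * Real.pi ^ 2 * c) * e1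
      have hfac : (4 * Real.pi ^ 2 * (k₀:ℝ) * (4 * Real.pi ^ 2 * (h:ℝ) ^ 2 + c ^ 2)) ≠ 0 := by
        positivity
      have hhc : (h:ℝ) * c₀ = (h₀:ℝ) * c := by
        rcases mul_eq_zero.mp P with hP | hP
        · exact absurd hP hfac
        · linarith [sub_eq_zero.mp hP]
      -- derive k*c₀ = k₀*c
      have Q : (2 * Real.pi * c * c₀ * (4 * Real.pi ^ 2 * (h₀:ℝ) ^ 2 + c₀ ^ 2)) *
          ((k:ℝ) * c₀ - (k₀:ℝ) * c) = 0 := by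
        linear_combination 2 * Real.pi * c₀ ^ 2 * e2 +
          (8 * Real.pi ^ 3 * (k₀:ℝ) * c₀ * ((h:ℝ) * c₀ + (h₀:ℝ) * c)) * hhc
      have hkc : (k:ℝ) * c₀ = (k₀:ℝ) * c := by
        rcases mul_eq_zero.mp Q with hQ | hQ
        · have : (2 * Real.pi * c * c₀ * (4 * Real.pi ^ 2 * (h₀:ℝ) ^ 2 + c₀ ^ 2)) ≠ 0 := by
            have := ne_of_gt hπ
            exact mul_ne_zero (mul_ne_zero (mul_ne_zero (mul_ne_zero (by norm_num) this) hc) hc₀)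
              hD₀ne
          exact absurd hQ this
        · linarith [sub_eq_zero.mp hQ]
      refine ⟨(k : ℚ) / (k₀ : ℚ), ?_, ?_, ?_⟩
      · push_cast
        field_simp
        linarith [hkc]
      · push_cast
        field_simp
        -- goal: h * k₀ = k * h₀ (up to arrangement)
        -- from hhc : h c₀ = h₀ c and hkc : k c₀ = k₀ c
        have : (h:ℝ) * (k₀:ℝ) * c₀ = (k:ℝ) * (h₀:ℝ) * c₀ := by
          calc (h:ℝ) * (k₀:ℝ) * c₀ = (k₀:ℝ) * ((h:ℝ) * c₀) := by ring
          _ = (k₀:ℝ) * ((h₀:ℝ) * c) := by rw [hhc]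
          _ = (h₀:ℝ) * ((k₀:ℝ) * c) := by ring
          _ = (h₀:ℝ) * ((k:ℝ) * c₀) := by rw [hkc]
          _ = (k:ℝ) * (h₀:ℝ) * c₀ := by ring
        have := mul_right_cancel₀ hc₀ this
        linarith
      · push_cast
        field_simp
    · rintro ⟨q, hc1, hh1, hk1⟩
      have hq : (q:ℝ) ≠ 0 := by
        intro h0
        rw [h0, zero_mul] at hc1
        exact hc hc1
      have hD₀ne := ne_of_gt hD₀pos
      rw [tauOf_eq', tauOf_eq', key']
      rw [hc1, hh1, hk1]
      have hDne' : 4 * Real.pi ^ 2 * ((q:ℝ) * (h₀:ℝ)) ^ 2 + ((q:ℝ) * c₀) ^ 2 ≠ 0 := by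
        have : 4 * Real.pi ^ 2 * ((q:ℝ) * (h₀:ℝ)) ^ 2 + ((q:ℝ) * c₀) ^ 2 =
            (q:ℝ) ^ 2 * (4 * Real.pi ^ 2 * (h₀:ℝ) ^ 2 + c₀ ^ 2) := by ring
        rw [this]
        exact mul_ne_zero (pow_ne_zero 2 hq) hD₀ne
      constructor
      · field_simp
      · field_simp
  · rintro q ⟨-, -, hk3⟩
    rw [hk3]
    field_simp
end

section
/- Fix (c, h, k) ∈ D and let d = gcd(h, k) > 0 and (c₀, h₀, k₀) = (c/d, h/d, k/d). Then (c₀, h₀, k₀) ∈ D and τ(c, h, k) = τ(c₀, h₀, k₀); moreover, for every triple (c̃, h̃, k̃) ∈ D with τ(c̃, h̃, k̃) = τ(c, h, k) there exists m ∈ ℤ such that (c̃, h̃, k̃) = m·(c₀, h₀, k₀). -/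
lemma tau_den_ne (c : ℝ) (h : ℤ) (hc : c ≠ 0) :
    (2 * (h : ℂ) * Real.pi - Complex.I * c) ≠ 0 := by
  intro H
  have := congrArg Complex.im H
  simp [Complex.mul_im] at this
  exact hc this

lemma tau_div (c : ℝ) (h k : ℤ) (hc : c ≠ 0) :
    tauOf c h k = (2 * (k : ℂ) * Real.pi) / (2 * (h : ℂ) * Real.pi - Complex.I * c) := by
  have hQ : (4 * Real.pi ^ 2 * (h : ℝ) ^ 2 + c ^ 2) ≠ 0 := by positivity
  rw [eq_div_iff (tau_den_ne c h hc)]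
  unfold tauOf
  push_cast
  have hQ' : ((Real.pi : ℂ) ^ 2 * (h : ℂ) ^ 2 * 4 + (c : ℂ) ^ 2) ≠ 0 := by
    have : ((4 * Real.pi ^ 2 * (h : ℝ) ^ 2 + c ^ 2 : ℝ) : ℂ) ≠ 0 :=
      Complex.ofReal_ne_zero.mpr hQ
    push_cast at this
    convert this using 2 <;> ring
  field_simp
  ring_nf
  rw [Complex.I_sq]
  field_simp
  ring

lemma tau_inj (c c' : ℝ) (h k h' k' : ℤ) (hc : c ≠ 0) (hc' : c' ≠ 0)
    (heq : tauOf c' h' k' = tauOf c h k) :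
    (h' : ℝ) * k = h * k' ∧ c' * k = c * k' := by
  rw [tau_div c h k hc, tau_div c' h' k' hc'] at heq
  rw [div_eq_div_iff (tau_den_ne c' h' hc') (tau_den_ne c h hc)] at heq
  have hre := congrArg Complex.re heq
  have him := congrArg Complex.im heq
  have hpi := Real.pi_ne_zero
  simp [Complex.mul_re, Complex.mul_im, Complex.sub_re, Complex.sub_im,
    Complex.mul_im, Complex.I_re, Complex.I_im] at hre him
  constructor
  · have H : (4 : ℝ) * Real.pi ^ 2 * ((h' : ℝ) * k) = 4 * Real.pi ^ 2 * (h * k') := by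
      nlinarith [hre]
    have h4 : (4 : ℝ) * Real.pi ^ 2 ≠ 0 := by positivity
    field_simp at H
    exact H
  · have H : (2 : ℝ) * Real.pi * (c' * k) = 2 * Real.pi * (c * k') := by
      nlinarith [him]
    have h2 : (2 : ℝ) * Real.pi ≠ 0 := by positivity
    field_simp at H
    exact H

theorem stmt_14 (c : ℝ) (h k : ℤ) (hD : memD c h k)
    (d : ℤ) (hd : d = Int.gcd h k)
    (c₀ : ℝ) (h₀ k₀ : ℤ)
    (hc₀ : c₀ = c / (d : ℝ)) (hh₀ : h₀ = h / d) (hk₀ : k₀ = k / d) :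
    0 < d ∧ memD c₀ h₀ k₀ ∧ tauOf c h k = tauOf c₀ h₀ k₀ ∧
    ∀ (c' : ℝ) (h' k' : ℤ), memD c' h' k' → tauOf c' h' k' = tauOf c h k →
      ∃ m : ℤ, c' = (m : ℝ) * c₀ ∧ h' = m * h₀ ∧ k' = m * k₀ := by
  obtain ⟨hc, hk, hck⟩ := hD
  have hgpos : 0 < Int.gcd h k := Int.gcd_pos_of_ne_zero_right h hk
  have hdpos : 0 < d := by rw [hd]; exact_mod_cast hgpos
  have hdne : d ≠ 0 := hdpos.ne'
  have hdvh : d ∣ h := hd ▸ Int.gcd_dvd_left h k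
  have hdvk : d ∣ k := hd ▸ Int.gcd_dvd_right h k
  have hh : h = d * h₀ := by rw [hh₀, Int.mul_ediv_cancel' hdvh]
  have hkk : k = d * k₀ := by rw [hk₀, Int.mul_ediv_cancel' hdvk]
  have hdR : (d : ℝ) ≠ 0 := Int.cast_ne_zero.mpr hdne
  have hcc : c = (d : ℝ) * c₀ := by rw [hc₀]; field_simp
  have hc₀ne : c₀ ≠ 0 := by
    intro H; apply hc; rw [hcc, H, mul_zero]
  have hk₀ne : k₀ ≠ 0 := by
    intro H; apply hk; rw [hkk, H, mul_zero]
  have hckpos : c₀ * (k₀ : ℝ) > 0 := by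
    have : c * (k : ℝ) = (d : ℝ) ^ 2 * (c₀ * k₀) := by
      rw [hcc, hkk]; push_cast; ring
    nlinarith [sq_nonneg (d : ℝ)]
  have hcop : Int.gcd h₀ k₀ = 1 := by
    rw [hh₀, hk₀, hd]; exact Int.gcd_div_gcd_div_gcd hgpos
  refine ⟨hdpos, ⟨hc₀ne, hk₀ne, hckpos⟩, ?_, ?_⟩
  · rw [tau_div c h k hc, tau_div c₀ h₀ k₀ hc₀ne]
    have hnum : (2 * (k : ℂ) * Real.pi) = (d : ℂ) * (2 * (k₀ : ℂ) * Real.pi) := by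
      rw [hkk]; push_cast; ring
    have hden : (2 * (h : ℂ) * Real.pi - Complex.I * c) =
        (d : ℂ) * (2 * (h₀ : ℂ) * Real.pi - Complex.I * c₀) := by
      rw [hh, hcc]; push_cast; ring
    rw [hnum, hden, mul_div_mul_left _ _ (by exact_mod_cast hdne : (d : ℂ) ≠ 0)]
  · intro c' h' k' ⟨hc', hk', hck'⟩ heq
    obtain ⟨H1, H2⟩ := tau_inj c c' h k h' k' hc hc' heq
    have H1' : h' * k = h * k' := by exact_mod_cast H1
    have E1 : h' * k₀ = h₀ * k' := by
      have : d * (h' * k₀) = d * (h₀ * k') := by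
        rw [hh, hkk] at H1'; linarith [H1']
      exact mul_left_cancel₀ hdne this
    have hdvd : k₀ ∣ k' := by
      have h1 : k₀ ∣ k' * h₀ := ⟨h', by linarith [E1]⟩
      exact Int.dvd_of_dvd_mul_left_of_gcd_one h1 (by rwa [Int.gcd_comm] at hcop)
    obtain ⟨m, hm⟩ := hdvd
    refine ⟨m, ?_, ?_, by rw [hm, mul_comm]⟩
    · have hkR : ((k : ℤ) : ℝ) ≠ 0 := Int.cast_ne_zero.mpr hk
      have : c' * (k : ℝ) = ((m : ℝ) * c₀) * k := by
        rw [H2, hm, hkk, hcc]; push_cast; ring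
      exact mul_right_cancel₀ hkR this
    · have : h' * k₀ = (m * h₀) * k₀ := by rw [E1, hm]; ring
      exact mul_right_cancel₀ hk₀ne this
end

section
/- Let λ ∈ ℝ with λ ≠ 0 and τ ∈ ℍ, and let f : ℂ → ℂ be a holomorphic (entire) function such that f(w + 1) = e^λ·f(w) and f(w + τ) = f(w) for every w ∈ ℂ. Then there exist c ∈ ℂ and m ∈ ℤ such that f(w) = c·e^{(2πim + λ)w} for all w ∈ ℂ. If, moreover, Re(τ)/|τ|² ∉ ℚ, then c = 0, i.e. f is identically zero. -/
open Complex Set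

theorem stmt_15 (lam : ℝ) (hlam : lam ≠ 0) (τ : ℂ) (hτ : 0 < τ.im)
    (f : ℂ → ℂ) (hf : Differentiable ℂ f)
    (hper1 : ∀ w : ℂ, f (w + 1) = Complex.exp (lam : ℂ) * f w)
    (hperτ : ∀ w : ℂ, f (w + τ) = f w) :
    ∃ (c : ℂ) (m : ℤ),
      (∀ w : ℂ, f w = c * Complex.exp ((2 * Real.pi * Complex.I * m + (lam : ℂ)) * w)) ∧
      ((¬ ∃ q : ℚ, τ.re / ‖τ‖ ^ 2 = (q : ℝ)) → c = 0) := by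
  have hτ0 : τ ≠ 0 := by
    intro h
    rw [h] at hτ
    simp at hτ
  -- Key identity: f (a+w) * f (a-w) = f a * f a
  have key : ∀ a w : ℂ, f (a + w) * f (a - w) = f a * f a := by
    intro a
    set h : ℂ → ℂ := fun w => f (a + w) * f (a - w) with hh
    have hdiff : Differentiable ℂ h :=
      (hf.comp ((differentiable_const a).add differentiable_id)).mul
        (hf.comp ((differentiable_const a).sub differentiable_id))
    have hcont : Continuous h := hdiff.continuous
    have hp1 : Function.Periodic h 1 := by
      intro w
      have e1 : f (a + (w + 1)) = Complex.exp lam * f (a + w) := by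
        have := hper1 (a + w); rwa [show a + w + 1 = a + (w + 1) by ring] at this
      have e2 : f (a - w) = Complex.exp lam * f (a - (w + 1)) := by
        have := hper1 (a - (w + 1)); rwa [show a - (w + 1) + 1 = a - w by ring] at this
      simp only [hh]
      rw [e1, e2]; ring
    have hpτ : Function.Periodic h τ := by
      intro w
      have e1 : f (a + (w + τ)) = f (a + w) := by
        have := hperτ (a + w); rwa [show a + w + τ = a + (w + τ) by ring] at this
      have e2 : f (a - (w + τ)) = f (a - w) := by
        have := hperτ (a - (w + τ)); rw [show a - (w + τ) + τ = a - w by ring] at this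
        exact this.symm
      simp only [hh]
      rw [e1, e2]
    have hbd : Bornology.IsBounded (Set.range h) := by
      have hK : IsCompact ((fun p : ℝ × ℝ => (p.1 : ℂ) + p.2 * τ) '' (Set.Icc 0 1 ×ˢ Set.Icc 0 1)) := by
        apply IsCompact.image (isCompact_Icc.prod isCompact_Icc)
        continuity
      have hsub : Set.range h ⊆ h '' ((fun p : ℝ × ℝ => (p.1 : ℂ) + p.2 * τ) '' (Set.Icc 0 1 ×ˢ Set.Icc 0 1)) := by
        rintro _ ⟨w, rfl⟩
        set u : ℝ := w.im / τ.im with hu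
        set n : ℤ := ⌊u⌋ with hn
        set t : ℝ := Int.fract u with ht
        set v : ℝ := w.re - u * τ.re with hv
        set m : ℤ := ⌊v⌋ with hm
        set s : ℝ := Int.fract v with hs
        have hsm : s + (m : ℝ) = v := by
          rw [hs, hm]; exact Int.fract_add_floor v
        have htn : t + (n : ℝ) = u := by
          rw [ht, hn]; exact Int.fract_add_floor u
        have huim : u * τ.im = w.im := by
          rw [hu]; field_simp
        have hbase : w = ((s : ℂ) + t * τ) + m + n * τ := by
          apply Complex.ext
          · simp only [Complex.add_re, Complex.mul_re, Complex.ofReal_re, Complex.ofReal_im,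
              Complex.intCast_re, Complex.intCast_im]
            -- push_cast not needed
            linear_combination -hsm - τ.re * htn - hv
          · simp only [Complex.add_im, Complex.mul_im, Complex.ofReal_re, Complex.ofReal_im,
              Complex.intCast_re, Complex.intCast_im]
            -- push_cast not needed
            linear_combination -τ.im * htn - huim
        refine ⟨(s : ℂ) + t * τ, ⟨(s, t), ⟨⟨Int.fract_nonneg v, (Int.fract_lt_one v).le⟩,
          ⟨Int.fract_nonneg u, (Int.fract_lt_one u).le⟩⟩, rfl⟩, ?_⟩
        have p1 : h (((s : ℂ) + t * τ) + m + n * τ) = h (((s : ℂ) + t * τ) + m) :=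
          (hpτ.int_mul n) (((s : ℂ) + t * τ) + m)
        have p2 : h (((s : ℂ) + t * τ) + m) = h ((s : ℂ) + t * τ) := by
          have := (hp1.int_mul m) ((s : ℂ) + t * τ)
          simpa using this
        rw [hbase, p1, p2]
      exact ((hK.image hcont).isBounded).subset hsub
    intro w
    have := hdiff.apply_eq_apply_of_bounded hbd w 0
    simpa [hh] using this
  by_cases hzero : ∀ w, f w = 0
  · exact ⟨0, 0, fun w => by simp [hzero w], fun _ => rfl⟩
  · push_neg at hzero
    obtain ⟨p, hp⟩ := hzero
    -- f never vanishes
    have hnv : ∀ w : ℂ, f w ≠ 0 := by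
      intro z₀ hz₀
      have hzw : ∀ w : ℂ, f (z₀ + w) * f (z₀ - w) = 0 := by
        intro w; rw [key z₀ w, hz₀]; ring
      have hcontz : ContinuousAt (fun w => f (z₀ + w)) (p - z₀) :=
        (hf.continuous.comp (continuous_const.add continuous_id)).continuousAt
      have hne : f (z₀ + (p - z₀)) ≠ 0 := by rwa [show z₀ + (p - z₀) = p by ring]
      have hev : ∀ᶠ w in nhds (p - z₀), f (z₀ + w) ≠ 0 := hcontz.eventually_ne hne
      have hev2 : ∀ᶠ w in nhds (p - z₀), f (z₀ - w) = 0 := by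
        filter_upwards [hev] with w hw
        rcases mul_eq_zero.1 (hzw w) with h | h
        · exact absurd h hw
        · exact h
      have hmap : Filter.Tendsto (fun y : ℂ => z₀ - y) (nhds (z₀ - (p - z₀))) (nhds (p - z₀)) := by
        have hc : Continuous fun y : ℂ => z₀ - y := continuous_const.sub continuous_id
        simpa [sub_sub_cancel] using hc.tendsto (z₀ - (p - z₀))
      have hev3 : f =ᶠ[nhds (z₀ - (p - z₀))] 0 := by
        have h5 := hmap.eventually hev2
        simp only [Filter.EventuallyEq, Pi.zero_apply]
        filter_upwards [h5] with y hy
        simpa [sub_sub_cancel] using hy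
      have hanal : AnalyticOnNhd ℂ f Set.univ :=
        analyticOnNhd_univ_iff_differentiable.2 hf
      have := hanal.eqOn_zero_of_preconnected_of_eventuallyEq_zero isPreconnected_univ
        (Set.mem_univ _) hev3
      exact hp (this (Set.mem_univ p))
    -- the logarithmic derivative is constant
    have hld : ∀ x y : ℂ, deriv f x * f y = f x * deriv f y := by
      intro x y
      set a := (x + y) / 2 with ha
      set w0 := (x - y) / 2 with hw0
      have hu : HasDerivAt (fun w => f (a + w)) (deriv f (a + w0)) w0 := by
        have h1 : HasDerivAt (fun w : ℂ => a + w) 1 w0 := (hasDerivAt_id w0).const_add a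
        have h2 : HasDerivAt f (deriv f (a + w0)) (a + w0) := (hf (a + w0)).hasDerivAt
        have h3 := h2.comp w0 h1
        simp only [mul_one] at h3
        exact h3
      have hv : HasDerivAt (fun w => f (a - w)) (-(deriv f (a - w0))) w0 := by
        have h1 : HasDerivAt (fun w : ℂ => a - w) (-1) w0 := (hasDerivAt_id w0).const_sub a
        have h2 : HasDerivAt f (deriv f (a - w0)) (a - w0) := (hf (a - w0)).hasDerivAt
        have h3 := h2.comp w0 h1
        simp only [mul_neg, mul_one] at h3
        exact h3
      have hmul : HasDerivAt (fun w => f (a + w) * f (a - w))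
          (deriv f (a + w0) * f (a - w0) + f (a + w0) * -(deriv f (a - w0))) w0 := hu.mul hv
      have hconst : HasDerivAt (fun w => f (a + w) * f (a - w)) 0 w0 := by
        have : (fun w => f (a + w) * f (a - w)) = fun _ => f a * f a := funext (key a)
        rw [this]; exact hasDerivAt_const w0 _
      have h0 := hmul.unique hconst
      have hx' : a + w0 = x := by rw [ha, hw0]; ring
      have hy' : a - w0 = y := by rw [ha, hw0]; ring
      rw [hx', hy'] at h0
      linear_combination h0
    set μ : ℂ := deriv f 0 / f 0 with hμ
    have hder : ∀ x : ℂ, deriv f x = μ * f x := by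
      intro x
      have h := hld x 0
      have h0 : f 0 ≠ 0 := hnv 0
      rw [hμ, div_mul_eq_mul_div, eq_div_iff h0]
      linear_combination h
    have hform : ∀ w : ℂ, f w = f 0 * Complex.exp (μ * w) := by
      set g : ℂ → ℂ := fun w => f w * Complex.exp (-μ * w) with hg
      have hgd : ∀ w : ℂ, HasDerivAt g 0 w := by
        intro w
        have h1 : HasDerivAt (fun w : ℂ => Complex.exp (-μ * w)) (Complex.exp (-μ * w) * -μ) w := by
          have : HasDerivAt (fun w : ℂ => -μ * w) (-μ) w := by
            simpa using (hasDerivAt_id w).const_mul (-μ)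
          simpa using this.cexp
        have h2 : HasDerivAt f (deriv f w) w := (hf w).hasDerivAt
        have h3 := h2.mul h1
        have heq : deriv f w * Complex.exp (-μ * w) + f w * (Complex.exp (-μ * w) * -μ) = 0 := by
          rw [hder w]; ring
        rwa [heq] at h3
      have hgdiff : Differentiable ℂ g := fun w => (hgd w).differentiableAt
      have hgconst : ∀ w, g w = g 0 := fun w =>
        is_const_of_deriv_eq_zero hgdiff (fun x => (hgd x).deriv) w 0
      intro w
      have h := hgconst w
      simp only [hg, neg_mul, neg_zero, mul_zero, Complex.exp_zero, mul_one] at h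
      have hexp : Complex.exp (μ * w) ≠ 0 := Complex.exp_ne_zero _
      rw [Complex.exp_neg] at h
      field_simp at h
      linear_combination h
    set c : ℂ := f 0 with hc
    have hc0 : c ≠ 0 := hnv 0
    have hexp1 : Complex.exp μ = Complex.exp lam := by
      have h1 := hper1 0
      rw [zero_add, hform 1, mul_one] at h1
      exact mul_left_cancel₀ hc0 (by linear_combination h1)
    have hexpτ : Complex.exp (μ * τ) = 1 := by
      have h1 := hperτ 0
      rw [zero_add, hform τ] at h1
      exact mul_left_cancel₀ hc0 (by linear_combination h1)
    obtain ⟨m, hm⟩ := Complex.exp_eq_exp_iff_exists_int.1 hexp1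
    obtain ⟨k, hk⟩ := Complex.exp_eq_one_iff.1 hexpτ
    refine ⟨c, m, fun w => ?_, fun hirr => ?_⟩
    · rw [hform w]
      congr 2
      rw [hm]; ring
    · exfalso
      have hμ0 : μ ≠ 0 := by
        intro h0
        have : μ.re = lam := by
          rw [hm]; simp
        rw [h0] at this
        simp at this
        exact hlam this.symm
      have hk0 : (k : ℂ) * (2 * ↑Real.pi * Complex.I) ≠ 0 := by
        rw [← hk]
        exact mul_ne_zero hμ0 hτ0
      have hkne : k ≠ 0 := by
        intro h0
        rw [h0] at hk0
        simp at hk0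
      -- component equations
      have hk' : ((lam : ℂ) + m * (2 * ↑Real.pi * Complex.I)) * τ = k * (2 * ↑Real.pi * Complex.I) := by
        rw [← hm]; exact hk
      have hre := congrArg Complex.re hk'
      have him := congrArg Complex.im hk'
      simp only [Complex.mul_re, Complex.mul_im, Complex.add_re, Complex.add_im,
        Complex.ofReal_re, Complex.ofReal_im, Complex.intCast_re, Complex.intCast_im,
        Complex.I_re, Complex.I_im, Complex.re_ofNat, Complex.im_ofNat] at hre him
      apply hirr
      refine ⟨(m : ℚ) / (k : ℚ), ?_⟩
      rw [Complex.sq_norm, Complex.normSq_apply]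
      have hkR : (k : ℝ) ≠ 0 := Int.cast_ne_zero.2 hkne
      have hnsq : τ.re * τ.re + τ.im * τ.im ≠ 0 := by
        nlinarith [sq_nonneg τ.re, sq_nonneg τ.im, hτ]
      push_cast
      rw [div_eq_div_iff hnsq hkR]
      have hpi : Real.pi ≠ 0 := Real.pi_ne_zero
      have key2 : 2 * Real.pi * ((m : ℝ) * (τ.re * τ.re + τ.im * τ.im) - τ.re * (k : ℝ)) = 0 := by
        linear_combination τ.re * him - τ.im * hre
      have := mul_eq_zero.1 key2
      rcases this with h | h
      · exfalso; nlinarith [Real.pi_pos]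
      · linarith
end

section
/- Let λ ∈ ℝ with λ ≠ 0 and τ ∈ ℍ, and let f : ℂ → ℂ be a holomorphic (entire) function such that exp(λ·D_τ(α))·f(w) = f(α + w) for every α ∈ Λ_τ and every w ∈ ℂ. Then there exist c ∈ ℂ and m ∈ ℤ such that f(w) = c·e^{(2πim + λ)w} for all w ∈ ℂ, and c = 0 if Re(τ)/|τ|² ∉ ℚ. -/
/-- Membership in the lattice `Λ_τ = ℤ + τ·ℤ ⊆ ℂ`. -/
def inLambda (τ z : ℂ) : Prop := ∃ a b : ℤ, z = (a : ℂ) + (b : ℂ) * τ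

open Complex Set

/-- A continuous function invariant under translation by the lattice `ℤ + τℤ` is bounded. -/
lemma bounded_of_lattice_periodic (τ : ℂ) (hτ : 0 < τ.im) (g : ℂ → ℂ)
    (hg : Continuous g)
    (hper : ∀ a b : ℤ, ∀ w : ℂ, g (((a : ℂ) + (b : ℂ) * τ) + w) = g w) :
    Bornology.IsBounded (Set.range g) := by
  have hK : IsCompact ((fun p : ℝ × ℝ => g ((p.1 : ℂ) + (p.2 : ℂ) * τ)) ''
      (Set.Icc (0:ℝ) 1 ×ˢ Set.Icc (0:ℝ) 1)) := by
    apply (isCompact_Icc.prod isCompact_Icc).image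
    apply hg.comp
    fun_prop
  refine hK.isBounded.subset ?_
  rintro _ ⟨w, rfl⟩
  set t : ℝ := w.im / τ.im with ht
  set s : ℝ := w.re - t * τ.re with hs
  have hτim : τ.im ≠ 0 := ne_of_gt hτ
  have hw : (s : ℂ) + (t : ℂ) * τ = w := by
    apply Complex.ext <;>
      simp only [hs, ht, Complex.add_re, Complex.add_im, Complex.mul_re, Complex.mul_im,
        Complex.ofReal_re, Complex.ofReal_im] <;>
      field_simp <;> ring
  refine ⟨(Int.fract s, Int.fract t), ⟨⟨Int.fract_nonneg s, (Int.fract_lt_one s).le⟩,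
    ⟨Int.fract_nonneg t, (Int.fract_lt_one t).le⟩⟩, ?_⟩
  have key := hper ⌊s⌋ ⌊t⌋ (((Int.fract s : ℝ) : ℂ) + ((Int.fract t : ℝ) : ℂ) * τ)
  have harg : (((⌊s⌋ : ℂ) + (⌊t⌋ : ℂ) * τ) +
      (((Int.fract s : ℝ) : ℂ) + ((Int.fract t : ℝ) : ℂ) * τ)) = w := by
    rw [← hw]
    have h1 : ((⌊s⌋ : ℂ)) + ((Int.fract s : ℝ) : ℂ) = (s : ℂ) := by
      rw [← Complex.ofReal_intCast, ← Complex.ofReal_add, Int.floor_add_fract]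
    have h2 : ((⌊t⌋ : ℂ)) + ((Int.fract t : ℝ) : ℂ) = (t : ℂ) := by
      rw [← Complex.ofReal_intCast, ← Complex.ofReal_add, Int.floor_add_fract]
    rw [← h1, ← h2]; ring
  rw [harg] at key
  exact key.symm

theorem stmt_16 (lam : ℝ) (hlam : lam ≠ 0) (τ : ℂ) (hτ : 0 < τ.im)
    (f : ℂ → ℂ) (hf : Differentiable ℂ f)
    (hfeq : ∀ α : ℂ, inLambda τ α → ∀ w : ℂ,
      Complex.exp ((lam : ℂ) * Dtau τ α) * f w = f (α + w)) :
    ∃ (c : ℂ) (m : ℤ),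
      (∀ w : ℂ, f w = c * Complex.exp ((2 * Real.pi * Complex.I * m + (lam : ℂ)) * w)) ∧
      ((¬ ∃ q : ℚ, τ.re / ‖τ‖ ^ 2 = (q : ℝ)) → c = 0) := by
  set E : ℂ → ℂ := fun α => Complex.exp ((lam : ℂ) * Dtau τ α) with hE
  have hEne : ∀ α, E α ≠ 0 := fun α => Complex.exp_ne_zero _
  have hfeq' : ∀ a b : ℤ, ∀ w : ℂ, f (((a : ℂ) + (b : ℂ) * τ) + w)
      = E ((a : ℂ) + (b : ℂ) * τ) * f w := by
    intro a b w
    exact (hfeq _ ⟨a, b, rfl⟩ w).symm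
  -- The function z ↦ f z * f (-z) is lattice periodic, hence constant (Liouville).
  have hgdiff : Differentiable ℂ (fun z => f z * f (-z)) :=
    hf.mul (hf.comp differentiable_neg)
  have hgper : ∀ a b : ℤ, ∀ w : ℂ, (fun z => f z * f (-z)) (((a : ℂ) + (b : ℂ) * τ) + w)
      = (fun z => f z * f (-z)) w := by
    intro a b w
    simp only
    have h1 := hfeq' a b w
    have h2 := hfeq' a b (-(((a : ℂ) + (b : ℂ) * τ) + w))
    have harg : ((a : ℂ) + (b : ℂ) * τ) + (-(((a : ℂ) + (b : ℂ) * τ) + w)) = -w := by ring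
    rw [harg] at h2
    rw [h1, h2]
    ring
  have hgconst : ∀ z : ℂ, f z * f (-z) = f 0 * f 0 := by
    intro z
    have hb := bounded_of_lattice_periodic τ hτ _ (hgdiff.continuous) hgper
    have := hgdiff.apply_eq_apply_of_bounded hb z 0
    simpa using this
  -- special values of Dtau
  have hden : τ - (starRingEnd ℂ) τ ≠ 0 := by
    rw [Complex.sub_conj]
    simp only [ne_eq, mul_eq_zero, Complex.I_ne_zero, or_false]
    exact_mod_cast mul_ne_zero two_ne_zero (ne_of_gt hτ)
  have hD1 : Dtau τ 1 = 1 := by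
    rw [Dtau]
    simp only [map_one, one_mul]
    exact div_self hden
  have hDτ : Dtau τ τ = 0 := by
    rw [Dtau]
    rw [show (starRingEnd ℂ) τ * τ - τ * (starRingEnd ℂ) τ = 0 by ring, zero_div]
  by_cases h0 : ∀ w : ℂ, f w ≠ 0
  · -- f nonvanishing: u = f'/f is lattice periodic entire, hence constant μ.
    have hfa : AnalyticOnNhd ℂ f univ := analyticOnNhd_univ_iff_differentiable.mpr hf
    have hf' : Differentiable ℂ (deriv f) := by
      have := hfa.deriv
      rwa [analyticOnNhd_univ_iff_differentiable] at this
    have hderiv_eq : ∀ a b : ℤ, ∀ w : ℂ, deriv f (((a : ℂ) + (b : ℂ) * τ) + w)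
        = E ((a : ℂ) + (b : ℂ) * τ) * deriv f w := by
      intro a b w
      have hfun : (fun w => f (((a : ℂ) + (b : ℂ) * τ) + w))
          = (fun w => E ((a : ℂ) + (b : ℂ) * τ) * f w) := funext (hfeq' a b)
      have := congrArg (fun F => deriv F w) hfun
      simpa [deriv_comp_const_add, deriv_const_mul _ (hf.differentiableAt)] using this
    set u : ℂ → ℂ := fun z => deriv f z / f z with hu
    have hudiff : Differentiable ℂ u := hf'.div hf h0
    have huper : ∀ a b : ℤ, ∀ w : ℂ, u (((a : ℂ) + (b : ℂ) * τ) + w) = u w := by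
      intro a b w
      simp only [hu, hderiv_eq a b w, hfeq' a b w]
      rw [mul_div_mul_left _ _ (hEne _)]
    have huconst : ∀ z : ℂ, u z = u 0 :=
      fun z => hudiff.apply_eq_apply_of_bounded
        (bounded_of_lattice_periodic τ hτ u hudiff.continuous huper) z 0
    set μ : ℂ := u 0 with hμ
    have hderivf : ∀ z : ℂ, deriv f z = μ * f z := by
      intro z
      have h := huconst z
      rw [hu] at h
      simp only at h
      field_simp [h0 z] at h
      rw [h, mul_comm]
    -- solve the ODE: f z = f 0 * exp (μ z)
    have hsol : ∀ z : ℂ, f z = f 0 * Complex.exp (μ * z) := by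
      have hh : ∀ z : ℂ, deriv (fun w => f w * Complex.exp (-(μ * w))) z = 0 := by
        intro z
        rw [deriv_fun_mul (hf.differentiableAt) (by fun_prop)]
        rw [hderivf z]
        have hd : deriv (fun w => Complex.exp (-(μ * w))) z
            = -μ * Complex.exp (-(μ * z)) := by
          have h1 : HasDerivAt (fun w : ℂ => -(μ * w)) (-μ) z := by
            simpa using ((hasDerivAt_id z).const_mul μ).fun_neg
          simpa [mul_comm] using h1.cexp.deriv
        rw [hd]; ring
      have hhd : Differentiable ℂ (fun w => f w * Complex.exp (-(μ * w))) := by fun_prop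
      intro z
      have hc := is_const_of_deriv_eq_zero hhd hh z 0
      simp only [mul_zero, neg_zero, Complex.exp_zero, mul_one] at hc
      rw [← hc, mul_assoc, ← Complex.exp_add]
      simp
    -- pin down μ
    have hτper : f τ = f 0 := by
      have := hfeq τ ⟨0, 1, by simp⟩ 0
      simpa [hDτ] using this.symm
    have h1per : f 1 = Complex.exp (lam : ℂ) * f 0 := by
      have := hfeq 1 ⟨1, 0, by simp⟩ 0
      simpa [hD1] using this.symm
    have hf0 : f 0 ≠ 0 := h0 0
    have hexpτ : Complex.exp (μ * τ) = 1 := by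
      have h := hτper
      rw [hsol τ] at h
      exact mul_left_cancel₀ hf0 (h.trans (mul_one (f 0)).symm)
    have hexp1 : Complex.exp μ = Complex.exp (lam : ℂ) := by
      have h := (hsol 1).symm.trans h1per
      rw [mul_one] at h
      exact mul_left_cancel₀ hf0 (by rw [h]; ring)
    obtain ⟨k, hk⟩ := Complex.exp_eq_one_iff.mp hexpτ
    obtain ⟨m, hm⟩ := Complex.exp_eq_exp_iff_exists_int.mp hexp1
    refine ⟨f 0, m, ?_, ?_⟩
    · intro w
      rw [hsol w, hm]
      ring_nf
    · intro hirr
      exfalso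
      apply hirr
      -- (lam + 2πim) τ = 2πik
      have hC : ((lam : ℂ) + (m : ℂ) * (2 * (Real.pi : ℂ) * Complex.I)) * τ
          = (k : ℂ) * (2 * (Real.pi : ℂ) * Complex.I) := by
        rw [← hm, ← hk]
      have hre := congrArg Complex.re hC
      have him := congrArg Complex.im hC
      simp only [Complex.add_re, Complex.add_im, Complex.mul_re, Complex.mul_im,
        Complex.ofReal_re, Complex.ofReal_im, Complex.intCast_re, Complex.intCast_im,
        Complex.I_re, Complex.I_im, Complex.re_ofNat, Complex.im_ofNat] at hre him
      ring_nf at hre him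
      set x := τ.re
      set y := τ.im
      have habs : ‖τ‖ ^ 2 = x * x + y * y := by
        rw [Complex.sq_norm, Complex.normSq_apply]
      rw [habs]
      have hpi := Real.pi_pos
      have hy : 0 < y := hτ
      have hpos : 0 < x * x + y * y := by nlinarith
      by_cases hm0 : m = 0
      · refine ⟨0, ?_⟩
        have hlx : lam * x = 0 := by
          subst hm0
          simpa using hre
        have hx : x = 0 := (mul_eq_zero.mp hlx).resolve_left hlam
        simp [hx]
      · have hkey : (m : ℝ) * (x * x + y * y) = (k : ℝ) * x := by
          have h2 : (2 * Real.pi) * ((m : ℝ) * (x * x + y * y))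
              = (2 * Real.pi) * ((k : ℝ) * x) := by
            linear_combination x * him - y * hre
          exact mul_left_cancel₀ (by positivity) h2
        have hm0' : (m : ℝ) ≠ 0 := Int.cast_ne_zero.mpr hm0
        have hk0 : (k : ℝ) ≠ 0 := by
          intro hk0
          rw [hk0, zero_mul] at hkey
          exact hm0' ((mul_eq_zero.mp hkey).resolve_right (ne_of_gt hpos))
        refine ⟨(m : ℚ) / (k : ℚ), ?_⟩
        push_cast
        rw [div_eq_div_iff (ne_of_gt hpos) hk0]
        linear_combination -hkey
  · -- f has a zero, so f z * f(-z) ≡ 0, and by the identity theorem f ≡ 0.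
    push_neg at h0
    obtain ⟨w0, hw0⟩ := h0
    have hC : ∀ z : ℂ, f z * f (-z) = 0 := by
      intro z
      have h1 := hgconst w0
      rw [hw0, zero_mul] at h1
      rw [hgconst z, ← h1]
    have hzero : ∀ z : ℂ, f z = 0 := by
      by_contra h
      push_neg at h
      obtain ⟨z₁, hz₁⟩ := h
      have hev : ∀ᶠ z in nhds z₁, f z ≠ 0 :=
        hf.continuous.continuousAt.eventually_ne hz₁
      have h3 : ∀ᶠ z in nhds (-z₁), f (-z) ≠ 0 := by
        have hcont : ContinuousAt (fun z : ℂ => -z) (-z₁) := continuous_neg.continuousAt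
        have : (fun z : ℂ => -z) (-z₁) = z₁ := by simp
        exact hcont.eventually (by rwa [this] at *)
      have hev2 : f =ᶠ[nhds (-z₁)] 0 := by
        filter_upwards [h3] with z hz
        rcases mul_eq_zero.mp (hC z) with h | h
        · exact h
        · exact absurd h hz
      have heq := (analyticOnNhd_univ_iff_differentiable.mpr hf).eqOn_zero_of_preconnected_of_eventuallyEq_zero
        isPreconnected_univ (Set.mem_univ (-z₁)) hev2
      exact hz₁ (heq (Set.mem_univ z₁))
    exact ⟨0, 0, fun w => by simp [hzero w], fun _ => rfl⟩
end
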